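/- Truncation error of the θ-ICN method: let a ∈ ℝ, a ≠ 0, R > 0, θ ∈ ℝ, x ∈ ℝ, and let f : ℝ → ℝ be three times continuously differentiable. For Δt > 0 set Δx = aΔt/(2R) and u_Δt(j) = f(x + jΔx). Then (S_{θ,R}(u_Δt)(0) − f(x − aΔt))/Δt² tends to (θ − 1/2)·a²·f''(x) as Δt → 0⁺. In particular, the θ-ICN method is second order accurate if and only if the leading coefficient vanishes, which happens exactly when θ = 1/2. -/

import Mathlib

open Filter Topology

/-- The two-iteration θ-ICN step with mesh ratio `R` and weight `θ`. -/
noncomputable def icnStep (θ R : ℝ) (u : ℤ → ℝ) : ℤ → ℝ := fun j =>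
  let ut1 : ℤ → ℝ := fun j => u j - R * (u (j + 1) - u (j - 1))
  let w1 : ℤ → ℝ := fun j => θ * ut1 j + (1 - θ) * u j
  let ut2 : ℤ → ℝ := fun j => u j - R * (w1 (j + 1) - w1 (j - 1))
  let w2 : ℤ → ℝ := fun j => θ * ut2 j + (1 - θ) * u j
  u j - R * (w2 (j + 1) - w2 (j - 1))

theorem icnStep_truncation_error (a R θ x : ℝ) (ha : a ≠ 0) (hR : 0 < R)
    (f : ℝ → ℝ) (hf : ContDiff ℝ 3 f) :
    Tendsto
      (fun Δt : ℝ =>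
        (icnStep θ R (fun j : ℤ => f (x + (j : ℝ) * (a * Δt / (2 * R)))) 0
            - f (x - a * Δt)) / Δt ^ 2)
      (𝓝[>] 0) (𝓝 ((θ - 1 / 2) * a ^ 2 * deriv (deriv f) x)) ∧
    ((θ - 1 / 2) * a ^ 2 = 0 ↔ θ = 1 / 2) := by
  have hR0 : R ≠ 0 := ne_of_gt hR
  have hfd : Differentiable ℝ f := hf.differentiable (by norm_num)
  have hf' : ContDiff ℝ 2 (deriv f) := by
    have h := (contDiff_succ_iff_deriv (n := 2)).mp (by exact_mod_cast hf)
    exact h.2.2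
  have hfd1 : Differentiable ℝ (deriv f) := hf'.differentiable (by norm_num)
  set D : ℝ → ℝ := deriv f with hD
  set D2 : ℝ → ℝ := deriv (deriv f) with hD2
  -- key derivative lemma
  have key : ∀ (g : ℝ → ℝ), Differentiable ℝ g → ∀ (d t : ℝ),
      HasDerivAt (fun s => g (x + d * (a * s / (2 * R))))
        (d * a / (2 * R) * deriv g (x + d * (a * t / (2 * R)))) t := by
    intro g hg d t
    have h1 : HasDerivAt (fun s : ℝ => x + d * (a * s / (2 * R))) (d * a / (2 * R)) t := by
      have he : (fun s : ℝ => x + d * (a * s / (2 * R))) =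
          fun s => x + (d * a / (2 * R)) * s := by funext s; ring
      rw [he]
      simpa using ((hasDerivAt_id t).const_mul (d * a / (2 * R))).const_add x
    simpa [mul_comm, Function.comp_def] using ((hg _).hasDerivAt.comp t h1)
  have keyE : ∀ (g : ℝ → ℝ), Differentiable ℝ g → ∀ t : ℝ,
      HasDerivAt (fun s => g (x - a * s)) (-a * deriv g (x - a * t)) t := by
    intro g hg t
    have h1 : HasDerivAt (fun s : ℝ => x - a * s) (-a) t := by
      have he : (fun s : ℝ => x - a * s) = fun s => x + (-a) * s := by funext s; ring
      rw [he]
      simpa using ((hasDerivAt_id t).const_mul (-a)).const_add x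
    simpa [mul_comm, Function.comp_def] using ((hg _).hasDerivAt.comp t h1)
  -- the numerator function
  set N : ℝ → ℝ := fun t =>
    icnStep θ R (fun j : ℤ => f (x + (j : ℝ) * (a * t / (2 * R)))) 0 - f (x - a * t) with hN
  have hNexp : N = fun t =>
      (f (x + 0 * (a * t / (2 * R)))
        - R * (f (x + 1 * (a * t / (2 * R))) - f (x + (-1) * (a * t / (2 * R))))
        + θ * R ^ 2 * (f (x + 2 * (a * t / (2 * R))) - 2 * f (x + 0 * (a * t / (2 * R)))
            + f (x + (-2) * (a * t / (2 * R))))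
        - θ ^ 2 * R ^ 3 * (f (x + 3 * (a * t / (2 * R))) - 3 * f (x + 1 * (a * t / (2 * R)))
            + 3 * f (x + (-1) * (a * t / (2 * R))) - f (x + (-3) * (a * t / (2 * R)))))
        - f (x - a * t) := by
    funext t
    simp only [hN, icnStep]
    norm_num
    ring
  -- first derivative
  set N1 : ℝ → ℝ := fun t =>
      (0 - R * (1 * a / (2 * R) * D (x + 1 * (a * t / (2 * R)))
              - (-1) * a / (2 * R) * D (x + (-1) * (a * t / (2 * R))))
        + θ * R ^ 2 * (2 * a / (2 * R) * D (x + 2 * (a * t / (2 * R))) - 2 * 0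
              + (-2) * a / (2 * R) * D (x + (-2) * (a * t / (2 * R))))
        - θ ^ 2 * R ^ 3 * (3 * a / (2 * R) * D (x + 3 * (a * t / (2 * R)))
              - 3 * (1 * a / (2 * R) * D (x + 1 * (a * t / (2 * R))))
              + 3 * ((-1) * a / (2 * R) * D (x + (-1) * (a * t / (2 * R))))
              - (-3) * a / (2 * R) * D (x + (-3) * (a * t / (2 * R)))))
        - (-a) * D (x - a * t) with hN1
  have hderiv1 : ∀ t, HasDerivAt N (N1 t) t := by
    intro t
    rw [hNexp]
    have h0 : HasDerivAt (fun s => f (x + 0 * (a * s / (2 * R)))) (0 : ℝ) t := by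
      simpa using key f hfd 0 t
    exact ((((h0.sub (((key f hfd 1 t).sub (key f hfd (-1) t)).const_mul R)).add
        ((((key f hfd 2 t).sub (h0.const_mul 2)).add (key f hfd (-2) t)).const_mul (θ * R ^ 2))).sub
        (((((key f hfd 3 t).sub ((key f hfd 1 t).const_mul 3)).add
          ((key f hfd (-1) t).const_mul 3)).sub (key f hfd (-3) t)).const_mul (θ ^ 2 * R ^ 3))).sub
        (keyE f hfd t))
  have hN10 : N1 0 = 0 := by
    simp only [hN1]
    norm_num
    field_simp
    ring
  -- second derivative at 0
  have hderiv2 : HasDerivAt N1 ((2 * θ - 1) * a ^ 2 * D2 x) 0 := by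
    have hdd : deriv D = D2 := rfl
    have h1 := (key D hfd1 1 0).const_mul (1 * a / (2 * R))
    have hm1 := (key D hfd1 (-1) 0).const_mul ((-1) * a / (2 * R))
    have h2 := (key D hfd1 2 0).const_mul (2 * a / (2 * R))
    have hm2 := (key D hfd1 (-2) 0).const_mul ((-2) * a / (2 * R))
    have h3 := (key D hfd1 3 0).const_mul (3 * a / (2 * R))
    have hm3 := (key D hfd1 (-3) 0).const_mul ((-3) * a / (2 * R))
    have hE := (keyE D hfd1 0).const_mul (-a)
    have hz : HasDerivAt (fun _ : ℝ => (0 : ℝ)) 0 0 := hasDerivAt_const 0 0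
    have hcomb := ((((hz.sub ((h1.sub hm1).const_mul R)).add
        (((h2.sub (hz.const_mul 2)).add hm2).const_mul (θ * R ^ 2))).sub
        ((((h3.sub (h1.const_mul 3)).add (hm1.const_mul 3)).sub hm3).const_mul
          (θ ^ 2 * R ^ 3))).sub hE)
    rw [hN1]
    convert hcomb using 1
    · rfl
    · rfl
    · rfl
    rw [hdd]
    norm_num
    field_simp
    ring
  have hN0 : N 0 = 0 := by
    rw [hNexp]
    simp only [mul_zero, zero_div, zero_mul, add_zero, sub_zero]
    ring
  have hNcont : Tendsto N (𝓝[>] (0:ℝ)) (𝓝 0) := by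
    have h := (hderiv1 0).continuousAt.tendsto
    rw [hN0] at h
    exact h.mono_left nhdsWithin_le_nhds
  have hgd : ∀ t ∈ Set.Ioo (0:ℝ) 1, HasDerivAt (fun s : ℝ => s ^ 2) (2 * t) t := by
    intro t _
    simpa using hasDerivAt_pow 2 t
  have hg0 : Tendsto (fun t : ℝ => t ^ 2) (𝓝[>] (0:ℝ)) (𝓝 0) := by
    have : Tendsto (fun t : ℝ => t ^ 2) (𝓝 (0:ℝ)) (𝓝 0) := by
      simpa using (continuous_pow 2).tendsto (0:ℝ)
    exact this.mono_left nhdsWithin_le_nhds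
  have hslope : Tendsto (fun t => N1 t / (2 * t)) (𝓝[>] (0:ℝ))
      (𝓝 ((2 * θ - 1) * a ^ 2 * D2 x / 2)) := by
    have h := hasDerivAt_iff_tendsto_slope.mp hderiv2
    have h2 : Tendsto (fun t => N1 t / t) (𝓝[>] (0:ℝ)) (𝓝 ((2 * θ - 1) * a ^ 2 * D2 x)) := by
      refine (h.mono_left (nhdsWithin_mono _ ?_)).congr' ?_
      · intro y hy
        exact ne_of_gt hy
      · filter_upwards [self_mem_nhdsWithin] with t ht
        simp [slope_def_field, hN10]
    have h3 := h2.div_const 2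
    refine h3.congr fun t => ?_
    rw [div_div, mul_comm]
  have hmain : Tendsto (fun t => N t / t ^ 2) (𝓝[>] (0:ℝ))
      (𝓝 ((2 * θ - 1) * a ^ 2 * D2 x / 2)) :=
    HasDerivAt.lhopital_zero_right_on_Ioo one_pos (fun t _ => hderiv1 t) hgd
      (fun t ht => ne_of_gt (by linarith [ht.1])) hNcont hg0 hslope
  constructor
  · have hval : (θ - 1 / 2) * a ^ 2 * D2 x = (2 * θ - 1) * a ^ 2 * D2 x / 2 := by ring
    rw [hval]
    exact hmain.congr fun t => rfl
  · constructor
    · intro h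
      have ha2 : a ^ 2 ≠ 0 := pow_ne_zero 2 ha
      have := (mul_eq_zero.mp h).resolve_right ha2
      linarith
    · intro h
      rw [h]; ring
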